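/- arXiv:1104.0373 — 3 statements merged into one kernel-verified Lean document; each statement's English description precedes it below -/
import Mathlib

section
/- If X is a symmetric log-concave random variable on the reals with variance 1, then its fourth moment satisfies E[X^4] ≤ 6. -/
open MeasureTheory Set Real

lemma expmom_integrable (k : ℕ) {b : ℝ} (hb : 0 < b) :
    IntegrableOn (fun x : ℝ => x ^ k * Real.exp (-(b * x))) (Set.Ioi 0) := by
  have h := integrableOn_rpow_mul_exp_neg_mul_rpow (p := 1) (s := (k : ℝ)) (b := b)
    (neg_one_lt_zero.trans_le (Nat.cast_nonneg k)) one_pos hb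
  refine (h.congr_fun ?_ measurableSet_Ioi)
  intro x hx
  simp only [Real.rpow_natCast, Real.rpow_one]
  ring_nf

lemma expmom_integral (k : ℕ) {b : ℝ} (hb : 0 < b) :
    ∫ x in Set.Ioi 0, x ^ k * Real.exp (-(b * x)) = (k.factorial : ℝ) / b ^ (k + 1) := by
  have h := Real.integral_rpow_mul_exp_neg_mul_Ioi (a := (k : ℝ) + 1) (by positivity) hb
  rw [show ((k : ℝ) + 1 - 1) = (k : ℝ) by ring] at h
  have h2 : ∫ x in Set.Ioi 0, x ^ k * Real.exp (-(b * x))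
      = ∫ t in Set.Ioi 0, t ^ (k : ℝ) * Real.exp (-(b * t)) := by
    refine setIntegral_congr_fun measurableSet_Ioi (fun x hx => ?_)
    rw [Real.rpow_natCast]
  rw [h2, h, Real.Gamma_nat_eq_factorial]
  rw [show ((k : ℝ) + 1) = ((k + 1 : ℕ) : ℝ) by push_cast; ring, Real.rpow_natCast]
  rw [div_pow, one_pow]
  ring

noncomputable def Ed (x : ℝ) : ℝ := Real.sqrt 2 / 2 * Real.exp (-(Real.sqrt 2 * x))

lemma sqrt2_pos : 0 < Real.sqrt 2 := Real.sqrt_pos.mpr (by norm_num)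

lemma Ed_pos (x : ℝ) : 0 < Ed x := by
  have := sqrt2_pos
  unfold Ed; positivity

lemma Ed_integrable (k : ℕ) : IntegrableOn (fun x : ℝ => x ^ k * Ed x) (Set.Ioi 0) := by
  have h := (expmom_integrable k sqrt2_pos).const_mul (Real.sqrt 2 / 2)
  refine IntegrableOn.congr_fun h (fun x hx => by unfold Ed; ring) measurableSet_Ioi

lemma Ed_moment (k : ℕ) :
    ∫ x in Set.Ioi 0, x ^ k * Ed x
      = Real.sqrt 2 / 2 * ((k.factorial : ℝ) / Real.sqrt 2 ^ (k + 1)) := by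
  have : ∀ x : ℝ, x ^ k * Ed x
      = Real.sqrt 2 / 2 * (x ^ k * Real.exp (-(Real.sqrt 2 * x))) := fun x => by
    unfold Ed; ring
  simp_rw [this]
  rw [MeasureTheory.integral_const_mul, expmom_integral k sqrt2_pos]

lemma Ed_moment0 : ∫ x in Set.Ioi 0, Ed x = 1 / 2 := by
  have h := Ed_moment 0
  simp only [pow_zero, one_mul, Nat.factorial_zero, Nat.cast_one, pow_one] at h
  rw [show (fun x : ℝ => Ed x) = fun x : ℝ => (1:ℝ) * Ed x by funext x; ring] at h ⊢
  rw [h]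
  have h2 : Real.sqrt 2 ≠ 0 := sqrt2_pos.ne'
  have hs : Real.sqrt 2 * Real.sqrt 2 = 2 := Real.mul_self_sqrt (by norm_num)
  simp only [zero_add, pow_one]
  field_simp

lemma Ed_moment2 : ∫ x in Set.Ioi 0, x ^ 2 * Ed x = 1 / 2 := by
  rw [Ed_moment 2]
  have h2 : Real.sqrt 2 ≠ 0 := sqrt2_pos.ne'
  have hs : Real.sqrt 2 * Real.sqrt 2 = 2 := Real.mul_self_sqrt (by norm_num)
  have h3 : Real.sqrt 2 ^ 3 = 2 * Real.sqrt 2 := by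
    rw [show (3:ℕ) = 2+1 from rfl, pow_succ, Real.sq_sqrt (by norm_num : (0:ℝ) ≤ 2)]
  rw [h3]
  simp only [Nat.factorial_two, Nat.cast_ofNat]
  field_simp

lemma Ed_moment4 : ∫ x in Set.Ioi 0, x ^ 4 * Ed x = 3 := by
  rw [Ed_moment 4]
  have h2 : Real.sqrt 2 ≠ 0 := sqrt2_pos.ne'
  have hs : Real.sqrt 2 * Real.sqrt 2 = 2 := Real.mul_self_sqrt (by norm_num)
  have h5 : Real.sqrt 2 ^ 5 = 4 * Real.sqrt 2 := by
    rw [show (5:ℕ) = 2*2+1 from rfl, pow_succ, pow_mul, Real.sq_sqrt (by norm_num : (0:ℝ) ≤ 2)]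
    norm_num
  rw [h5]
  norm_num [Nat.factorial]
  field_simp
  linarith

lemma Ed_log_linear {a c t : ℝ} (ht0 : 0 ≤ t) (ht1 : t ≤ 1) :
    Ed a ^ t * Ed c ^ (1 - t) = Ed (t * a + (1 - t) * c) := by
  have hcpos : (0:ℝ) < Real.sqrt 2 / 2 := by have := sqrt2_pos; positivity
  unfold Ed
  rw [Real.mul_rpow hcpos.le (Real.exp_pos _).le, Real.mul_rpow hcpos.le (Real.exp_pos _).le]
  rw [← Real.exp_mul, ← Real.exp_mul]
  rw [show Real.sqrt 2 / 2 * Real.exp (-(Real.sqrt 2 * (t * a + (1 - t) * c)))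
      = ((Real.sqrt 2 / 2) ^ t * (Real.sqrt 2 / 2) ^ (1 - t)) *
        (Real.exp (-(Real.sqrt 2 * a) * t) * Real.exp (-(Real.sqrt 2 * c) * (1 - t))) from ?_]
  · ring
  · rw [← Real.rpow_add hcpos, ← Real.exp_add]
    ring_nf
    rw [Real.rpow_one]
    ring

lemma key_half (g : ℝ → ℝ) (hg0 : ∀ x, 0 ≤ g x)
    (hlc : ∀ x y : ℝ, ∀ t : ℝ, 0 ≤ t → t ≤ 1 →
      g x ^ t * g y ^ (1 - t) ≤ g (t * x + (1 - t) * y))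
    (hint0 : IntegrableOn g (Set.Ioi 0))
    (hint2 : IntegrableOn (fun x => x ^ 2 * g x) (Set.Ioi 0))
    (hint4 : IntegrableOn (fun x => x ^ 4 * g x) (Set.Ioi 0))
    (h0 : ∫ x in Set.Ioi 0, g x = 1 / 2)
    (h2 : ∫ x in Set.Ioi 0, x ^ 2 * g x = 1 / 2) :
    ∫ x in Set.Ioi 0, x ^ 4 * g x ≤ 3 := by
  classical
  set A : Set ℝ := {x : ℝ | 0 < x ∧ Ed x ≤ g x} with hA
  -- order convexity of A
  have hAconv : ∀ a ∈ A, ∀ c ∈ A, ∀ x : ℝ, a ≤ x → x ≤ c → x ∈ A := by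
    rintro a ⟨ha0, haE⟩ c ⟨hc0, hcE⟩ x hax hxc
    have hx0 : 0 < x := lt_of_lt_of_le ha0 hax
    rcases eq_or_lt_of_le (hax.trans hxc) with heq | hac
    · have hxa : x = a := le_antisymm (heq ▸ hxc) hax
      exact ⟨hx0, hxa ▸ haE⟩
    · set t : ℝ := (c - x) / (c - a) with htdef
      have hca : 0 < c - a := sub_pos.mpr hac
      have ht0 : 0 ≤ t := div_nonneg (sub_nonneg.mpr hxc) hca.le
      have ht1 : t ≤ 1 := (div_le_one hca).mpr (by linarith)
      have hxe : t * a + (1 - t) * c = x := by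
        have h1 : t * (c - a) = c - x := div_mul_cancel₀ _ hca.ne'
        nlinarith [h1]
      refine ⟨hx0, ?_⟩
      calc Ed x = Ed a ^ t * Ed c ^ (1 - t) := by rw [Ed_log_linear ht0 ht1, hxe]
        _ ≤ g a ^ t * g c ^ (1 - t) := by
            apply mul_le_mul
            · exact Real.rpow_le_rpow (Ed_pos a).le haE ht0
            · exact Real.rpow_le_rpow (Ed_pos c).le hcE (by linarith)
            · exact Real.rpow_nonneg (Ed_pos c).le _
            · exact Real.rpow_nonneg (hg0 a) _
        _ ≤ g (t * a + (1 - t) * c) := hlc a c t ht0 ht1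
        _ = g x := by rw [hxe]
  -- A is nonempty
  have hAne : A.Nonempty := by
    by_contra hne
    push_neg at hne
    have hlt : ∀ x : ℝ, 0 < x → g x < Ed x := by
      intro x hx
      by_contra hge
      exact (hne.subset (⟨hx, not_lt.mp hge⟩ : x ∈ A)).elim
    have hdint : IntegrableOn (fun x => Ed x - g x) (Set.Ioi 0) := (Ed_integrable 0).congr_fun
      (fun x _ => by simp) measurableSet_Ioi |>.sub hint0
    have hzero : ∫ x in Set.Ioi 0, (Ed x - g x) = 0 := by
      rw [integral_sub ((Ed_integrable 0).congr_fun (fun x _ => by simp) measurableSet_Ioi) hint0]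
      rw [show (∫ x in Set.Ioi 0, Ed x) = ∫ x in Set.Ioi 0, x ^ 0 * Ed x from
        setIntegral_congr_fun measurableSet_Ioi (fun x _ => by simp)] at *
      rw [show (∫ x in Set.Ioi 0, x ^ 0 * Ed x) = 1/2 from by
        rw [← Ed_moment0]; exact setIntegral_congr_fun measurableSet_Ioi (fun x _ => by simp)]
      rw [h0]; ring
    have hnn : 0 ≤ᶠ[ae (volume.restrict (Set.Ioi 0))] fun x => Ed x - g x := by
      refine (ae_restrict_iff' measurableSet_Ioi).mpr (ae_of_all _ fun x hx => ?_)
      exact sub_nonneg.mpr (hlt x hx).le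
    have heq0 := (integral_eq_zero_iff_of_nonneg_ae hnn hdint).mp hzero
    have hae : ∀ᵐ x ∂volume, x ∈ Set.Ioi (0:ℝ) → Ed x - g x = 0 :=
      ae_imp_of_ae_restrict heq0
    have hzero' : volume {x : ℝ | ¬(x ∈ Set.Ioi (0:ℝ) → Ed x - g x = 0)} = 0 := hae
    have hsub : Set.Ioo (0:ℝ) 1 ⊆ {x : ℝ | ¬(x ∈ Set.Ioi (0:ℝ) → Ed x - g x = 0)} := by
      intro x hx
      simp only [Set.mem_setOf_eq, Classical.not_imp]
      exact ⟨hx.1, sub_ne_zero.mpr (hlt x hx.1).ne'⟩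
    have := measure_mono_null hsub hzero'
    rw [Real.volume_Ioo] at this
    simp at this
  have hbelow : BddBelow A := ⟨0, fun a ha => ha.1.le⟩
  have hr0 : (0:ℝ) ≤ sInf A := le_csInf hAne (fun a ha => ha.1.le)
  set r : ℝ := sInf A with hrdef
  -- helper: points below r are not in A, hence g < Ed there
  have hbelow_r : ∀ x : ℝ, 0 < x → x < r → g x < Ed x := by
    intro x hx0 hxr
    by_contra hge
    have hxA : x ∈ A := ⟨hx0, not_lt.mp hge⟩
    exact absurd (csInf_le hbelow hxA) (not_le.mpr hxr)
  by_cases hbd : BddAbove A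
  · -- bounded case
    set s : ℝ := sSup A with hsdef
    have hrs : r ≤ s := csInf_le_csSup hAne hbelow hbd
    have hs0 : (0:ℝ) ≤ s := hr0.trans hrs
    have habove_s : ∀ x : ℝ, s < x → g x < Ed x := by
      intro x hsx
      by_contra hge
      have hxA : x ∈ A := ⟨hs0.trans_lt hsx, not_lt.mp hge⟩
      exact absurd (le_csSup hbd hxA) (not_le.mpr hsx)
    have hpt : ∀ x : ℝ, 0 < x → x ≠ r → x ≠ s →
        ((x^2 - r^2) * (x^2 - s^2)) * (g x - Ed x) ≤ 0 := by
      intro x hx0 hxr hxs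
      rcases lt_trichotomy x r with hlt | heq | hgt
      · have hg : g x - Ed x < 0 := sub_neg.mpr (hbelow_r x hx0 hlt)
        have h1 : x^2 - r^2 < 0 := by nlinarith
        have h2 : x^2 - s^2 < 0 := by nlinarith
        exact (mul_nonpos_of_nonneg_of_nonpos (mul_pos_of_neg_of_neg h1 h2).le hg.le)
      · exact absurd heq hxr
      · rcases lt_trichotomy x s with hlt' | heq' | hgt'
        · obtain ⟨a, haA, hax⟩ := exists_lt_of_csInf_lt hAne hgt
          obtain ⟨c, hcA, hxc⟩ := exists_lt_of_lt_csSup hAne hlt'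
          have hxA : x ∈ A := hAconv a haA c hcA x hax.le hxc.le
          have hg : 0 ≤ g x - Ed x := sub_nonneg.mpr hxA.2
          have h1 : 0 ≤ x^2 - r^2 := by nlinarith
          have h2 : x^2 - s^2 ≤ 0 := by nlinarith
          exact mul_nonpos_of_nonpos_of_nonneg (mul_nonpos_of_nonneg_of_nonpos h1 h2) hg
        · exact absurd heq' hxs
        · have hg : g x - Ed x < 0 := sub_neg.mpr (habove_s x hgt')
          have h1 : 0 ≤ x^2 - r^2 := by nlinarith
          have h2 : 0 ≤ x^2 - s^2 := by nlinarith
          exact mul_nonpos_of_nonneg_of_nonpos (mul_nonneg h1 h2) hg.le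
    -- a.e. bound on Ioi 0
    have hnullrs : volume ({r, s} : Set ℝ) = 0 :=
      Set.Countable.measure_zero ((Set.countable_singleton s).insert r) volume
    have haenotrs : ∀ᵐ x ∂volume, x ∉ ({r, s} : Set ℝ) :=
      (MeasureTheory.measure_eq_zero_iff_ae_notMem).mp hnullrs
    have haept : ∀ᵐ x ∂(volume.restrict (Set.Ioi 0)),
        ((x^2 - r^2) * (x^2 - s^2)) * (g x - Ed x) ≤ 0 := by
      filter_upwards [ae_restrict_of_ae haenotrs, ae_restrict_mem measurableSet_Ioi]
        with x hx1 hx2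
      simp only [Set.mem_insert_iff, Set.mem_singleton_iff, not_or] at hx1
      exact hpt x hx2 hx1.1 hx1.2
    -- integrability of the product
    have hφeq : (fun x : ℝ => ((x^2 - r^2) * (x^2 - s^2)) * (g x - Ed x))
        = fun x => ((x^4 * g x - x^4 * Ed x) - (r^2 + s^2) * (x^2 * g x - x^2 * Ed x))
            + (r^2 * s^2) * (g x - Ed x) := by
      funext x; ring
    have hE0' : IntegrableOn Ed (Set.Ioi 0) :=
      (Ed_integrable 0).congr_fun (fun x _ => by simp) measurableSet_Ioi
    have i1 : IntegrableOn (fun x : ℝ => x^4 * g x - x^4 * Ed x) (Set.Ioi 0) :=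
      hint4.sub (Ed_integrable 4)
    have i2' : IntegrableOn (fun x : ℝ => (r^2 + s^2) * (x^2 * g x - x^2 * Ed x)) (Set.Ioi 0) :=
      (hint2.sub (Ed_integrable 2)).const_mul _
    have i3' : IntegrableOn (fun x : ℝ => (r^2 * s^2) * (g x - Ed x)) (Set.Ioi 0) :=
      (hint0.sub hE0').const_mul _
    have i12 : IntegrableOn (fun x : ℝ =>
        (x^4 * g x - x^4 * Ed x) - (r^2 + s^2) * (x^2 * g x - x^2 * Ed x)) (Set.Ioi 0) :=
      i1.sub i2'
    have hφint : IntegrableOn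
        (fun x : ℝ => ((x^2 - r^2) * (x^2 - s^2)) * (g x - Ed x)) (Set.Ioi 0) := by
      rw [hφeq]
      exact i12.add i3'
    have hle0 : ∫ x in Set.Ioi 0, ((x^2 - r^2) * (x^2 - s^2)) * (g x - Ed x) ≤ 0 :=
      integral_nonpos_of_ae haept
    -- expand the integral
    have hexp : ∫ x in Set.Ioi 0, ((x^2 - r^2) * (x^2 - s^2)) * (g x - Ed x)
        = (∫ x in Set.Ioi 0, x^4 * g x) - 3 := by
      rw [hφeq]
      rw [integral_add i12 i3', integral_sub i1 i2', integral_sub hint4 (Ed_integrable 4),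
        MeasureTheory.integral_const_mul, MeasureTheory.integral_const_mul,
        integral_sub hint2 (Ed_integrable 2), integral_sub hint0 hE0',
        h0, h2, Ed_moment0, Ed_moment2, Ed_moment4]
      ring
    linarith [hexp ▸ hle0]
  · -- unbounded case: g = Ed a.e. on Ioi 0
    have habove : ∀ x : ℝ, r < x → x ∈ A := by
      intro x hrx
      obtain ⟨a, haA, hax⟩ := exists_lt_of_csInf_lt hAne hrx
      obtain ⟨c, hcA, hxc⟩ := (not_bddAbove_iff.mp hbd) x
      exact hAconv a haA c hcA x hax.le hxc.le
    have hE0' : IntegrableOn Ed (Set.Ioi 0) :=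
      (Ed_integrable 0).congr_fun (fun x _ => by simp) measurableSet_Ioi
    have hpt : ∀ x : ℝ, 0 < x → x ≠ r → 0 ≤ (x^2 - r^2) * (g x - Ed x) := by
      intro x hx0 hxr
      rcases lt_trichotomy x r with hlt | heq | hgt
      · have h1 : x^2 - r^2 < 0 := by nlinarith
        exact (mul_pos_of_neg_of_neg h1 (sub_neg.mpr (hbelow_r x hx0 hlt))).le
      · exact absurd heq hxr
      · have h1 : 0 ≤ x^2 - r^2 := by nlinarith
        exact mul_nonneg h1 (sub_nonneg.mpr (habove x hgt).2)
    have hψeq : (fun x : ℝ => (x^2 - r^2) * (g x - Ed x))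
        = fun x => (x^2 * g x - x^2 * Ed x) - r^2 * (g x - Ed x) := by
      funext x; ring
    have i2s : IntegrableOn (fun x : ℝ => x^2 * g x - x^2 * Ed x) (Set.Ioi 0) :=
      hint2.sub (Ed_integrable 2)
    have i3r : IntegrableOn (fun x : ℝ => r^2 * (g x - Ed x)) (Set.Ioi 0) :=
      (hint0.sub hE0').const_mul _
    have iψ : IntegrableOn (fun x : ℝ => (x^2 - r^2) * (g x - Ed x)) (Set.Ioi 0) := by
      rw [hψeq]; exact i2s.sub i3r
    have hnullr : volume ({r} : Set ℝ) = 0 := Real.volume_singleton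
    have haenotr : ∀ᵐ x ∂volume, x ∉ ({r} : Set ℝ) :=
      (MeasureTheory.measure_eq_zero_iff_ae_notMem).mp hnullr
    have hnn : 0 ≤ᶠ[ae (volume.restrict (Set.Ioi 0))]
        fun x => (x^2 - r^2) * (g x - Ed x) := by
      filter_upwards [ae_restrict_of_ae haenotr, ae_restrict_mem measurableSet_Ioi]
        with x hx1 hx2
      exact hpt x hx2 (by simpa using hx1)
    have hzero : ∫ x in Set.Ioi 0, (x^2 - r^2) * (g x - Ed x) = 0 := by
      rw [hψeq, integral_sub i2s i3r, integral_sub hint2 (Ed_integrable 2),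
        MeasureTheory.integral_const_mul, integral_sub hint0 hE0',
        h0, h2, Ed_moment0, Ed_moment2]
      ring
    have heq0 := (integral_eq_zero_iff_of_nonneg_ae hnn iψ).mp hzero
    have haeEq : (fun x : ℝ => x^4 * g x)
        =ᶠ[ae (volume.restrict (Set.Ioi 0))] fun x => x^4 * Ed x := by
      filter_upwards [heq0, ae_restrict_of_ae haenotr, ae_restrict_mem measurableSet_Ioi]
        with x hx0eq hx1 hx2
      have hxr : x ≠ r := by simpa using hx1
      have hx0 : (0:ℝ) < x := hx2
      have hfac : x^2 - r^2 ≠ 0 := by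
        rcases lt_or_gt_of_ne hxr with h | h
        · exact ne_of_lt (by nlinarith)
        · exact ne_of_gt (by nlinarith)
      have : g x - Ed x = 0 := by
        have hx0eq' : (x^2 - r^2) * (g x - Ed x) = 0 := hx0eq
        rcases mul_eq_zero.mp hx0eq' with h | h
        · exact absurd h hfac
        · exact h
      rw [sub_eq_zero.mp this]
    rw [integral_congr_ae haeEq, Ed_moment4]

lemma lc_aemeasurable (g : ℝ → ℝ) (hg0 : ∀ x, 0 ≤ g x)
    (hlc : ∀ x y : ℝ, ∀ t : ℝ, 0 ≤ t → t ≤ 1 →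
      g x ^ t * g y ^ (1 - t) ≤ g (t * x + (1 - t) * y)) :
    AEMeasurable g (volume : Measure ℝ) := by
  classical
  set S : Set ℝ := {x | 0 < g x} with hS
  have hSconv : Convex ℝ S := by
    intro x hx y hy a b ha hb hab
    have h := hlc x y a ha (by linarith)
    rw [show (1 : ℝ) - a = b by linarith] at h
    have hpos : 0 < g x ^ a * g y ^ b :=
      mul_pos (Real.rpow_pos_of_pos hx a) (Real.rpow_pos_of_pos hy b)
    show 0 < g (a • x + b • y)
    simp only [smul_eq_mul]
    exact hpos.trans_le h
  have hlog : ConcaveOn ℝ S (fun x => Real.log (g x)) := by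
    refine ⟨hSconv, ?_⟩
    intro x hx y hy a b ha hb hab
    have hgx : (0:ℝ) < g x := hx
    have hgy : (0:ℝ) < g y := hy
    have h := hlc x y a ha (by linarith)
    rw [show (1 : ℝ) - a = b by linarith] at h
    simp only [smul_eq_mul]
    calc a * Real.log (g x) + b * Real.log (g y)
        = Real.log (g x ^ a * g y ^ b) := by
          rw [Real.log_mul (Real.rpow_pos_of_pos hgx a).ne' (Real.rpow_pos_of_pos hgy b).ne',
            Real.log_rpow hgx, Real.log_rpow hgy]
      _ ≤ Real.log (g (a * x + b * y)) :=
          Real.log_le_log (mul_pos (Real.rpow_pos_of_pos hgx a) (Real.rpow_pos_of_pos hgy b)) h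
  have hcont : ContinuousOn g (interior S) := by
    have hc := hlog.continuousOn_interior
    have h2 : ContinuousOn (fun x => Real.exp (Real.log (g x))) (interior S) :=
      Real.continuous_exp.comp_continuousOn hc
    refine h2.congr fun x hx => ?_
    have hxS : x ∈ S := interior_subset hx
    exact (Real.exp_log hxS).symm
  have hmres : AEMeasurable g (volume.restrict (interior S)) :=
    hcont.aemeasurable isOpen_interior.measurableSet
  refine ⟨(interior S).indicator (hmres.mk g),
    hmres.measurable_mk.indicator isOpen_interior.measurableSet, ?_⟩
  have h1 : ∀ᵐ x ∂(volume : Measure ℝ), x ∈ interior S → g x = hmres.mk g x :=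
    ae_imp_of_ae_restrict hmres.ae_eq_mk
  have hfr : volume (S \ interior S) = 0 := by
    refine measure_mono_null (fun x hx => ?_) (hSconv.addHaar_frontier volume)
    exact ⟨subset_closure hx.1, hx.2⟩
  have h2 : ∀ᵐ x ∂(volume : Measure ℝ), x ∉ S \ interior S :=
    measure_eq_zero_iff_ae_notMem.mp hfr
  filter_upwards [h1, h2] with x hx1 hx2
  by_cases hxU : x ∈ interior S
  · rw [Set.indicator_of_mem hxU]; exact hx1 hxU
  · rw [Set.indicator_of_notMem hxU]
    have hxS : x ∉ S := fun hmem => hx2 ⟨hmem, hxU⟩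
    have : ¬ (0:ℝ) < g x := hxS
    linarith [hg0 x]

open ProbabilityTheory
open scoped ENNReal NNReal

/-- If `X` is a symmetric log-concave random variable on the reals with variance 1,
then its fourth moment satisfies `E[X^4] ≤ 6`. -/
theorem stmt0 {Ω : Type*} [MeasureSpace Ω] [IsProbabilityMeasure (ℙ : Measure Ω)]
    (X : Ω → ℝ) (hX : Measurable X)
    (hsym : Measure.map X ℙ = Measure.map (fun ω => -X ω) ℙ)
    (g : ℝ → ℝ) (hg0 : ∀ x, 0 ≤ g x)
    (hdens : Measure.map X ℙ = volume.withDensity (fun x => ENNReal.ofReal (g x)))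
    (hlc : ∀ x y : ℝ, ∀ t : ℝ, 0 ≤ t → t ≤ 1 →
      g x ^ t * g y ^ (1 - t) ≤ g (t * x + (1 - t) * y))
    (hvar : ∫ ω, (X ω) ^ 2 ∂ℙ = 1) :
    ∫ ω, (X ω) ^ 4 ∂ℙ ≤ 6 := by
  classical
  by_cases hi4 : Integrable (fun ω => X ω ^ 4) ℙ
  swap
  · rw [integral_undef hi4]; norm_num
  set μ := Measure.map X ℙ with hμ
  have hXae : AEMeasurable X ℙ := hX.aemeasurable
  have hprob : IsProbabilityMeasure μ := Measure.isProbabilityMeasure_map hXae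
  have hgae : AEMeasurable g (volume : Measure ℝ) := lc_aemeasurable g hg0 hlc
  have hf : AEMeasurable (fun x => (g x).toNNReal) (volume : Measure ℝ) :=
    measurable_real_toNNReal.comp_aemeasurable hgae
  have hdens' : μ = volume.withDensity (fun x => ((g x).toNNReal : ℝ≥0∞)) := hdens
  have hres : μ.restrict (Set.Ioi 0)
      = (volume.restrict (Set.Ioi 0)).withDensity (fun x => ((g x).toNNReal : ℝ≥0∞)) := by
    rw [hdens']; exact restrict_withDensity measurableSet_Ioi _
  -- conversion of integrals
  have hsmul_eq : ∀ ψ : ℝ → ℝ, (fun x => (g x).toNNReal • ψ x) = fun x => g x * ψ x := by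
    intro ψ; funext x
    simp [NNReal.smul_def, Real.coe_toNNReal _ (hg0 x)]
  have hconv_int : ∀ ψ : ℝ → ℝ, (∫ x in Set.Ioi 0, ψ x ∂μ) = ∫ x in Set.Ioi 0, g x * ψ x := by
    intro ψ
    rw [hres, integral_withDensity_eq_integral_smul₀ (hf.restrict) ψ, hsmul_eq]
  have hconv_Int : ∀ ψ : ℝ → ℝ, IntegrableOn ψ (Set.Ioi 0) μ →
      IntegrableOn (fun x => g x * ψ x) (Set.Ioi 0) volume := by
    intro ψ h
    rw [IntegrableOn, hres] at h
    rw [integrable_withDensity_iff_integrable_smul₀ hf.restrict, hsmul_eq] at h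
    exact h
  -- symmetry
  have hneg : Measure.map Neg.neg μ = μ := by
    rw [hμ, Measure.map_map measurable_neg hX]
    exact (hsym.symm : Measure.map (fun ω => -X ω) ℙ = Measure.map X ℙ)
  have hsymInt : ∀ k : ℕ, Even k →
      ∫ x in Set.Iio 0, x ^ k ∂μ = ∫ x in Set.Ioi 0, x ^ k ∂μ := by
    intro k hk
    have hm : AEStronglyMeasurable (fun x : ℝ => x ^ k) (Measure.map Neg.neg μ) :=
      (continuous_pow k).aestronglyMeasurable
    calc ∫ x in Set.Iio 0, x ^ k ∂μ
        = ∫ x in Set.Iio 0, x ^ k ∂(Measure.map Neg.neg μ) := by rw [hneg]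
      _ = ∫ x in Neg.neg ⁻¹' (Set.Iio 0), (-x) ^ k ∂μ :=
          setIntegral_map measurableSet_Iio hm measurable_neg.aemeasurable
      _ = ∫ x in Set.Ioi 0, x ^ k ∂μ := by
          have hpre : (Neg.neg ⁻¹' (Set.Iio (0:ℝ))) = Set.Ioi 0 := by
            ext z; simp
          rw [hpre]
          exact setIntegral_congr_fun measurableSet_Ioi fun x _ => hk.neg_pow x
  have hμ0 : μ ({0} : Set ℝ) = 0 := by
    rw [hdens', MeasureTheory.withDensity_apply _ (measurableSet_singleton 0)]
    exact setLIntegral_measure_zero _ _ Real.volume_singleton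
  have hIci : μ.restrict (Set.Ici (0:ℝ)) = μ.restrict (Set.Ioi 0) := by
    refine Measure.restrict_congr_set ?_
    rw [MeasureTheory.ae_eq_set]
    constructor
    · refine measure_mono_null (fun x hx => ?_) hμ0
      have h1 : (0:ℝ) ≤ x := hx.1
      have h2 : ¬ (0:ℝ) < x := hx.2
      simp only [Set.mem_singleton_iff]
      linarith [not_lt.mp h2]
    · have hemp : Set.Ioi (0:ℝ) \ Set.Ici 0 = ∅ := by
        ext x; simp only [Set.mem_diff, Set.mem_Ioi, Set.mem_Ici, Set.mem_empty_iff_false,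
          iff_false, not_and, not_not]
        intro h; exact h.le
      rw [hemp]; exact measure_empty
  have hsplit : ∀ k : ℕ, Even k → Integrable (fun x : ℝ => x ^ k) μ →
      ∫ x, x ^ k ∂μ = 2 * ∫ x in Set.Ioi 0, x ^ k ∂μ := by
    intro k hk hint
    have h1 := (integral_add_compl (measurableSet_Iio (a := (0:ℝ))) hint).symm
    rw [compl_Iio] at h1
    rw [h1, hsymInt k hk, show ∫ x in Set.Ici (0:ℝ), x ^ k ∂μ
      = ∫ x in Set.Ioi (0:ℝ), x ^ k ∂μ from by rw [hIci]]
    ring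
  -- integrability and moments
  have hi2 : Integrable (fun ω => X ω ^ 2) ℙ := by
    by_contra hni; rw [integral_undef hni] at hvar; norm_num at hvar
  have hmi2 : Integrable (fun x : ℝ => x ^ 2) μ := by
    rw [hμ]
    exact (integrable_map_measure (continuous_pow 2).aestronglyMeasurable hXae).mpr hi2
  have hmi4 : Integrable (fun x : ℝ => x ^ 4) μ := by
    rw [hμ]
    exact (integrable_map_measure (continuous_pow 4).aestronglyMeasurable hXae).mpr hi4
  have hmi0 : Integrable (fun x : ℝ => x ^ 0) μ := by
    simp only [pow_zero]; exact integrable_const 1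
  have hvar' : ∫ x, x ^ 2 ∂μ = 1 := by
    rw [hμ, integral_map hXae (continuous_pow 2).aestronglyMeasurable]; exact hvar
  have h4' : ∫ ω, X ω ^ 4 ∂ℙ = ∫ x, x ^ 4 ∂μ := by
    rw [hμ, integral_map hXae (continuous_pow 4).aestronglyMeasurable]
  have h0' : ∫ x, (x:ℝ) ^ 0 ∂μ = 1 := by simp
  -- half-line moments of μ
  have e0 : ∫ x in Set.Ioi 0, (x:ℝ) ^ 0 ∂μ = 1/2 := by
    have := hsplit 0 Even.zero hmi0; rw [h0'] at this; linarith
  have e2 : ∫ x in Set.Ioi 0, (x:ℝ) ^ 2 ∂μ = 1/2 := by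
    have := hsplit 2 even_two hmi2; rw [hvar'] at this; linarith
  have e4 : ∫ ω, X ω ^ 4 ∂ℙ = 2 * ∫ x in Set.Ioi 0, (x:ℝ) ^ 4 ∂μ := by
    rw [h4']; exact hsplit 4 (by decide) hmi4
  -- transfer to density integrals
  have I0 : IntegrableOn g (Set.Ioi 0) volume := by
    have h := hconv_Int (fun x => x ^ 0) (hmi0.integrableOn)
    exact h.congr_fun (fun x hx => by simp) measurableSet_Ioi
  have I2 : IntegrableOn (fun x : ℝ => x ^ 2 * g x) (Set.Ioi 0) volume := by
    have h := hconv_Int (fun x => x ^ 2) (hmi2.integrableOn)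
    exact h.congr_fun (fun x hx => by ring) measurableSet_Ioi
  have I4 : IntegrableOn (fun x : ℝ => x ^ 4 * g x) (Set.Ioi 0) volume := by
    have h := hconv_Int (fun x => x ^ 4) (hmi4.integrableOn)
    exact h.congr_fun (fun x hx => by ring) measurableSet_Ioi
  have t0 : ∫ x in Set.Ioi 0, g x = 1/2 := by
    calc ∫ x in Set.Ioi 0, g x
        = ∫ x in Set.Ioi 0, g x * x ^ 0 :=
          setIntegral_congr_fun measurableSet_Ioi (fun x hx => by simp)
      _ = ∫ x in Set.Ioi 0, (x:ℝ) ^ 0 ∂μ := (hconv_int _).symm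
      _ = 1/2 := e0
  have t2 : ∫ x in Set.Ioi 0, x ^ 2 * g x = 1/2 := by
    calc ∫ x in Set.Ioi 0, x ^ 2 * g x
        = ∫ x in Set.Ioi 0, g x * x ^ 2 :=
          setIntegral_congr_fun measurableSet_Ioi (fun x hx => by ring)
      _ = ∫ x in Set.Ioi 0, (x:ℝ) ^ 2 ∂μ := (hconv_int _).symm
      _ = 1/2 := e2
  have t4 : ∫ x in Set.Ioi 0, (x:ℝ) ^ 4 ∂μ = ∫ x in Set.Ioi 0, x ^ 4 * g x := by
    calc ∫ x in Set.Ioi 0, (x:ℝ) ^ 4 ∂μ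
        = ∫ x in Set.Ioi 0, g x * x ^ 4 := hconv_int _
      _ = ∫ x in Set.Ioi 0, x ^ 4 * g x :=
          setIntegral_congr_fun measurableSet_Ioi (fun x hx => by ring)
  have hk := key_half g hg0 hlc I0 I2 I4 t0 t2
  rw [e4, t4]
  linarith
end

section
/- Let K be a symmetric convex body in ℝ^n and let z ∈ K. Then the Lebesgue measure of the set {x ∈ K : |⟨a,x⟩| ≥ (1/2)⟨a,z⟩} is at least 2^{-n}·vol(K), for any a ∈ ℝ^n. -/
open MeasureTheory

private lemma vol_preimage_aff {n : ℕ} (z : Fin n → ℝ) (S : Set (Fin n → ℝ)) :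
    volume ((fun y : Fin n → ℝ => (2:ℝ) • y - z) ⁻¹' S) = (2 : ENNReal)⁻¹ ^ n * volume S := by
  have h : (fun y : Fin n → ℝ => (2:ℝ) • y - z) ⁻¹' S
      = ((2:ℝ) • ·) ⁻¹' ((fun w => w + (-z)) ⁻¹' S) := by
    ext y; simp [sub_eq_add_neg]
  rw [h, MeasureTheory.Measure.addHaar_preimage_smul volume (by norm_num : (2:ℝ) ≠ 0),
    measure_preimage_add_right, Module.finrank_fin_fun]
  congr 1
  rw [abs_of_nonneg (by positivity)]
  rw [ENNReal.ofReal_inv_of_pos (by positivity), ENNReal.ofReal_pow (by norm_num)]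
  simp [ENNReal.inv_pow]

/-- For a symmetric convex body `K ⊂ ℝⁿ`, `z ∈ K` and `a ∈ ℝⁿ`, the set
`{x ∈ K : |⟨a,x⟩| ≥ ⟨a,z⟩/2}` has Lebesgue measure at least `2⁻ⁿ vol(K)`. -/
theorem stmt3 {n : ℕ} (K : Set (Fin n → ℝ))
    (hconv : Convex ℝ K) (hcomp : IsCompact K) (hsymm : K = -K)
    (hint : (interior K).Nonempty)
    (z : Fin n → ℝ) (hz : z ∈ K) (a : Fin n → ℝ) :
    (2 : ENNReal)⁻¹ ^ n * volume K ≤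
      volume {x | x ∈ K ∧ (∑ i, a i * z i) / 2 ≤ |∑ i, a i * x i|} := by
  set c : ℝ := ∑ i, a i * z i with hc
  set f : (Fin n → ℝ) → ℝ := fun x => ∑ i, a i * x i with hf
  have hfcont : Continuous f := by
    apply continuous_finset_sum
    intro i _
    exact continuous_const.mul (continuous_apply i)
  have hKm : MeasurableSet K := hcomp.measurableSet
  rcases le_or_gt c 0 with hcle | hcpos
  · -- easy case: the set is all of K
    have hset : {x | x ∈ K ∧ c / 2 ≤ |f x|} = K := by
      ext x
      simp only [Set.mem_setOf_eq]
      exact ⟨fun h => h.1, fun h => ⟨h, le_trans (by linarith) (abs_nonneg _)⟩⟩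
    rw [hset]
    calc (2 : ENNReal)⁻¹ ^ n * volume K ≤ 1 * volume K := by
          gcongr
          exact pow_le_one' (by simp) n
      _ = volume K := one_mul _
  · -- main case
    set Sp : Set (Fin n → ℝ) := {x ∈ K | 0 ≤ f x} with hSp
    set Sm : Set (Fin n → ℝ) := {x ∈ K | f x < 0} with hSm
    have hSpm : MeasurableSet Sp := hKm.inter (measurableSet_le measurable_const hfcont.measurable)
    have hSmm : MeasurableSet Sm := hKm.inter (measurableSet_lt hfcont.measurable measurable_const)
    have hsplit : volume Sp + volume Sm = volume K := by
      rw [← measure_union (by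
        intro t htp htm x hx
        exact absurd ((htp hx).2) (not_le.mpr ((htm hx).2))) hSmm]
      congr 1
      ext x
      by_cases h : 0 ≤ f x <;> simp [hSp, hSm, h, not_le.mp, lt_of_not_ge] <;> tauto
    set Ap : Set (Fin n → ℝ) := (fun y => (2:ℝ) • y - z) ⁻¹' Sp with hAp
    set Am : Set (Fin n → ℝ) := (fun y => (2:ℝ) • y - (-z)) ⁻¹' Sm with hAm
    have hfaff : ∀ (w y : Fin n → ℝ), f ((2:ℝ) • y - w) = 2 * f y - f w := by
      intro w y
      simp only [hf]
      rw [Finset.mul_sum, ← Finset.sum_sub_distrib]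
      congr 1; ext i
      simp [Pi.smul_apply, smul_eq_mul]
      ring
    have hfz : f z = c := rfl
    have hfnegz : f (-z) = -c := by
      simp only [hf, hc, Pi.neg_apply, mul_neg, Finset.sum_neg_distrib]
    -- membership of Ap, Am in the target, plus the key inequalities
    have hmidK : ∀ w ∈ K, ∀ y, (2:ℝ) • y - w ∈ K → y ∈ K := by
      intro w hw y hy
      have : y = (1/2 : ℝ) • ((2:ℝ) • y - w) + (1/2 : ℝ) • w := by
        ext i; simp; ring
      rw [this]
      exact hconv hy hw (by norm_num) (by norm_num) (by norm_num)
    have hnegz : -z ∈ K := by rw [hsymm]; simpa using hz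
    have hApsub : Ap ⊆ {x | x ∈ K ∧ c / 2 ≤ |f x|} := by
      intro y hy
      obtain ⟨hyK, hyf⟩ := hy
      have h1 : f ((2:ℝ) • y - z) = 2 * f y - c := by rw [hfaff]
      have h2 : c / 2 ≤ f y := by rw [h1] at hyf; linarith
      exact ⟨hmidK z hz y hyK, le_trans h2 (le_abs_self _)⟩
    have hAmsub : Am ⊆ {x | x ∈ K ∧ c / 2 ≤ |f x|} := by
      intro y hy
      obtain ⟨hyK, hyf⟩ := hy
      have h1 : f ((2:ℝ) • y - (-z)) = 2 * f y + c := by rw [hfaff, hfnegz]; ring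
      have h2 : f y ≤ -(c / 2) := by rw [h1] at hyf; linarith
      refine ⟨hmidK (-z) hnegz y hyK, ?_⟩
      rw [abs_of_nonpos (by linarith)]
      linarith
    have hdisj : Disjoint Ap Am := by
      intro t htp htm y hy
      obtain ⟨_, h1⟩ := htp hy
      obtain ⟨_, h2⟩ := htm hy
      rw [hfaff, hfz] at h1
      rw [hfaff, hfnegz] at h2
      linarith
    have hApm : MeasurableSet Ap :=
      hSpm.preimage (by fun_prop)
    have hAmm : MeasurableSet Am :=
      hSmm.preimage (by fun_prop)
    calc (2 : ENNReal)⁻¹ ^ n * volume K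
        = (2 : ENNReal)⁻¹ ^ n * volume Sp + (2 : ENNReal)⁻¹ ^ n * volume Sm := by
          rw [← hsplit, mul_add]
      _ = volume Ap + volume Am := by rw [hAp, hAm, vol_preimage_aff, vol_preimage_aff]
      _ = volume (Ap ∪ Am) := (measure_union hdisj hAmm).symm
      _ ≤ volume {x | x ∈ K ∧ c / 2 ≤ |f x|} :=
          measure_mono (Set.union_subset hApsub hAmsub)
end

section
/- Let u: ℝ → ℝ be twice differentiable with u'' convex and u''(0) = 0. For s ∈ ℝ define v_s(t) = (1/4)[u(s+t) + u(s−t) + u(−s+t) + u(−s−t)]. Then v_s is nondecreasing on [0, ∞). -/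
/-- If `u` is twice differentiable with `u''` convex and `u''(0) = 0`, then
`v_s(t) = (u(s+t) + u(s−t) + u(−s+t) + u(−s−t))/4` is nondecreasing on `[0,∞)`. -/
theorem stmt14 (u u' u'' : ℝ → ℝ)
    (hu' : ∀ x, HasDerivAt u (u' x) x)
    (hu'' : ∀ x, HasDerivAt u' (u'' x) x)
    (hconv : ConvexOn ℝ Set.univ u'') (h0 : u'' 0 = 0) (s : ℝ) :
    MonotoneOn (fun t => (u (s + t) + u (s - t) + u (-s + t) + u (-s - t)) / 4)
      (Set.Ici (0 : ℝ)) := by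
  -- key convexity fact: u'' x + u'' (-x) ≥ 0
  have key : ∀ x : ℝ, 0 ≤ u'' x + u'' (-x) := by
    intro x
    have := hconv.2 (Set.mem_univ x) (Set.mem_univ (-x))
      (by norm_num : (0:ℝ) ≤ 1/2) (by norm_num : (0:ℝ) ≤ 1/2) (by norm_num)
    have hx : (1/2 : ℝ) • x + (1/2 : ℝ) • (-x) = 0 := by
      rw [smul_eq_mul, smul_eq_mul]; ring
    rw [hx, h0] at this
    simp only [smul_eq_mul] at this
    linarith
  -- v' as a function
  set V' : ℝ → ℝ := fun t => (u' (s + t) - u' (s - t) + u' (-s + t) - u' (-s - t)) / 4 with hV'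
  have hVderiv : ∀ t, HasDerivAt
      (fun t => (u (s + t) + u (s - t) + u (-s + t) + u (-s - t)) / 4) (V' t) t := by
    intro t
    have h1 : HasDerivAt (fun t => u (s + t)) (u' (s + t)) t := by
      have := (hu' (s + t)).comp t (((hasDerivAt_id t).const_add s))
      simpa [Function.comp_def] using this
    have h2 : HasDerivAt (fun t => u (s - t)) (-u' (s - t)) t := by
      have := (hu' (s - t)).comp t ((hasDerivAt_id t).const_sub s)
      simpa [Function.comp_def] using this
    have h3 : HasDerivAt (fun t => u (-s + t)) (u' (-s + t)) t := by
      have := (hu' (-s + t)).comp t (((hasDerivAt_id t).const_add (-s)))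
      simpa [Function.comp_def] using this
    have h4 : HasDerivAt (fun t => u (-s - t)) (-u' (-s - t)) t := by
      have := (hu' (-s - t)).comp t ((hasDerivAt_id t).const_sub (-s))
      simpa [Function.comp_def] using this
    have := (((h1.add h2).add h3).add h4).div_const 4
    refine this.congr_deriv ?_
    show _ = (u' (s + t) - u' (s - t) + u' (-s + t) - u' (-s - t)) / 4
    ring
  have hV'deriv : ∀ t, HasDerivAt V'
      ((u'' (s + t) + u'' (s - t) + u'' (-s + t) + u'' (-s - t)) / 4) t := by
    intro t
    have h1 : HasDerivAt (fun t => u' (s + t)) (u'' (s + t)) t := by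
      have := (hu'' (s + t)).comp t (((hasDerivAt_id t).const_add s))
      simpa [Function.comp_def] using this
    have h2 : HasDerivAt (fun t => u' (s - t)) (-u'' (s - t)) t := by
      have := (hu'' (s - t)).comp t ((hasDerivAt_id t).const_sub s)
      simpa [Function.comp_def] using this
    have h3 : HasDerivAt (fun t => u' (-s + t)) (u'' (-s + t)) t := by
      have := (hu'' (-s + t)).comp t (((hasDerivAt_id t).const_add (-s)))
      simpa [Function.comp_def] using this
    have h4 : HasDerivAt (fun t => u' (-s - t)) (-u'' (-s - t)) t := by
      have := (hu'' (-s - t)).comp t ((hasDerivAt_id t).const_sub (-s))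
      simpa [Function.comp_def] using this
    have := (((h1.sub h2).add h3).sub h4).div_const 4
    refine this.congr_deriv ?_
    ring
  -- V' is monotone on ℝ
  have hV'mono : Monotone V' := by
    apply monotone_of_deriv_nonneg
    · exact fun t => (hV'deriv t).differentiableAt
    · intro t
      rw [(hV'deriv t).deriv]
      have k1 := key (s + t)
      have k2 := key (s - t)
      have h1 : -(s + t) = -s - t := by ring
      have h2 : -(s - t) = -s + t := by ring
      rw [h1] at k1; rw [h2] at k2
      linarith
  have hV'0 : V' 0 = 0 := by
    show (u' (s + 0) - u' (s - 0) + u' (-s + 0) - u' (-s - 0)) / 4 = 0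
    norm_num
  have hV'nonneg : ∀ t ∈ Set.Ici (0:ℝ), 0 ≤ V' t := by
    intro t ht
    have := hV'mono (Set.mem_Ici.mp ht)
    rw [hV'0] at this
    exact this
  have hcu : Continuous u := by
    rw [continuous_iff_continuousAt]; exact fun x => (hu' x).continuousAt
  apply monotoneOn_of_deriv_nonneg (convex_Ici 0)
  · exact Continuous.continuousOn (by fun_prop)
  · intro t _
    exact (hVderiv t).differentiableAt.differentiableWithinAt
  · intro t ht
    rw [(hVderiv t).deriv]
    exact hV'nonneg t (le_of_lt (by simpa using ht))
end
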